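/- arXiv:1807.10907 — 2 statements merged into one kernel-verified Lean document; each statement's English description precedes it below -/
import Mathlib

section
/- Let n ≥ 3 and t ≥ n+1, and set T = ⟨tn², tn²+n, t²n+1, t²n+n+1, t²n²−t²n−1⟩. If α, β, γ, δ, ε ∈ ℕ satisfy α·tn² + β·(tn²+n) + γ·(t²n+1) + δ·(t²n+n+1) + ε·(t²n²−t²n−1) = t²n²+n, then (α,β,γ,δ,ε) is one of (0,0,n,0,0), (t−1,1,0,0,0), (0,0,0,1,1). Consequently the set of lengths of factorizations of t²n²+n into atoms of T is exactly {2, n, t}. -/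
/-- `a` is an atom of the additive submonoid `T` of `ℕ`: a nonzero element of `T`
that is not a sum of two nonzero elements of `T`. -/
def NumAtom (T : AddSubmonoid ℕ) (a : ℕ) : Prop :=
  a ∈ T ∧ a ≠ 0 ∧ ¬ ∃ b c : ℕ, b ∈ T ∧ c ∈ T ∧ b ≠ 0 ∧ c ≠ 0 ∧ a = b + c

/-- `AS T x` is the set of lengths of factorizations of `x` into atoms of `T`:
the set of `m : ℕ` such that `x` is a sum of `m` atoms of `T`. -/
def AS (T : AddSubmonoid ℕ) (x : ℕ) : Set ℕ :=
  { m | ∃ s : Multiset ℕ, (∀ a ∈ s, NumAtom T a) ∧ Multiset.card s = m ∧ s.sum = x }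


section Abstract
variable {n t A C E : ℕ}

lemma derived (hn : 3 ≤ n) (ht : n + 1 ≤ t) (h1 : n < A) (h2 : A + n < C)
    (h6 : E + C = t * A) (h7 : n * C = t * A + n) :
    4 ≤ t ∧ 3 * C ≤ n * C ∧ 2 * C ≤ E + n := by
  have hC3 : 3 * C ≤ n * C := Nat.mul_le_mul_right C hn
  refine ⟨by omega, hC3, by omega⟩

lemma classA (hn : 3 ≤ n) (ht : n + 1 ≤ t) (h1 : n < A) (h2 : A + n < C)
    (h6 : E + C = t * A) (h7 : n * C = t * A + n)
    (α β γ δ ε : ℕ)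
    (heq : α * A + β * A + β * n + γ * C + δ * C + δ * n + ε * E = A) :
    α = 1 ∧ β = 0 ∧ γ = 0 ∧ δ = 0 ∧ ε = 0 := by
  obtain ⟨t4, hC3, hE2⟩ := derived hn ht h1 h2 h6 h7
  have hβ : β = 0 := by
    by_contra hc
    have h' : A ≤ β * A := Nat.le_mul_of_pos_left _ (Nat.pos_of_ne_zero hc)
    have h'' : n ≤ β * n := Nat.le_mul_of_pos_left _ (Nat.pos_of_ne_zero hc)
    omega
  have hγ : γ = 0 := by
    by_contra hc
    have h' : C ≤ γ * C := Nat.le_mul_of_pos_left _ (Nat.pos_of_ne_zero hc)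
    omega
  have hδ : δ = 0 := by
    by_contra hc
    have h' : C ≤ δ * C := Nat.le_mul_of_pos_left _ (Nat.pos_of_ne_zero hc)
    omega
  have hε : ε = 0 := by
    by_contra hc
    have h' : E ≤ ε * E := Nat.le_mul_of_pos_left _ (Nat.pos_of_ne_zero hc)
    omega
  subst hβ hγ hδ hε
  simp only [Nat.zero_mul, Nat.add_zero, Nat.mul_zero] at heq
  have : α * A = 1 * A := by omega
  exact ⟨Nat.eq_of_mul_eq_mul_right (by omega) this, rfl, rfl, rfl, rfl⟩

lemma classB (hn : 3 ≤ n) (ht : n + 1 ≤ t) (h1 : n < A) (h2 : A + n < C)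
    (h6 : E + C = t * A) (h7 : n * C = t * A + n)
    (α β γ δ ε : ℕ)
    (heq : α * A + β * A + β * n + γ * C + δ * C + δ * n + ε * E = A + n) :
    α = 0 ∧ β = 1 ∧ γ = 0 ∧ δ = 0 ∧ ε = 0 := by
  obtain ⟨t4, hC3, hE2⟩ := derived hn ht h1 h2 h6 h7
  have hγ : γ = 0 := by
    by_contra hc
    have h' : C ≤ γ * C := Nat.le_mul_of_pos_left _ (Nat.pos_of_ne_zero hc)
    omega
  have hδ : δ = 0 := by
    by_contra hc
    have h' : C ≤ δ * C := Nat.le_mul_of_pos_left _ (Nat.pos_of_ne_zero hc)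
    omega
  have hε : ε = 0 := by
    by_contra hc
    have h' : E ≤ ε * E := Nat.le_mul_of_pos_left _ (Nat.pos_of_ne_zero hc)
    omega
  subst hγ hδ hε
  simp only [Nat.zero_mul, Nat.add_zero, Nat.mul_zero] at heq
  -- heq : α*A + β*A + β*n = A + n
  have hβ1 : β ≤ 1 := by
    by_contra hc
    have h' : 2 * A ≤ β * A := Nat.mul_le_mul_right A (by omega)
    have h'' : 2 * n ≤ β * n := Nat.mul_le_mul_right n (by omega)
    omega
  rcases (by omega : β = 0 ∨ β = 1) with rfl | rfl
  · exfalso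
    simp only [Nat.zero_mul, Nat.add_zero] at heq
    rcases Nat.lt_or_ge α 2 with hα | hα
    · have h' : α * A ≤ 1 * A := Nat.mul_le_mul_right A (by omega)
      omega
    · have h' : 2 * A ≤ α * A := Nat.mul_le_mul_right A hα
      omega
  · have hαA : α * A = 0 := by omega
    rcases Nat.mul_eq_zero.mp hαA with rfl | hA0
    · exact ⟨rfl, rfl, rfl, rfl, rfl⟩
    · omega

lemma classC (hn : 3 ≤ n) (ht : n + 1 ≤ t) (h1 : n < A) (h2 : A + n < C)
    (h4 : ∃ a, A = a * n) (h5 : ∃ q, C = q * n + 1)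
    (h6 : E + C = t * A) (h7 : n * C = t * A + n)
    (α β γ δ ε : ℕ)
    (heq : α * A + β * A + β * n + γ * C + δ * C + δ * n + ε * E = C) :
    α = 0 ∧ β = 0 ∧ γ = 1 ∧ δ = 0 ∧ ε = 0 := by
  obtain ⟨t4, hC3, hE2⟩ := derived hn ht h1 h2 h6 h7
  obtain ⟨a, ha⟩ := h4
  obtain ⟨q, hq⟩ := h5
  have hδ : δ = 0 := by
    by_contra hc
    have h' : C ≤ δ * C := Nat.le_mul_of_pos_left _ (Nat.pos_of_ne_zero hc)
    have h'' : n ≤ δ * n := Nat.le_mul_of_pos_left _ (Nat.pos_of_ne_zero hc)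
    omega
  have hε : ε = 0 := by
    by_contra hc
    have h' : E ≤ ε * E := Nat.le_mul_of_pos_left _ (Nat.pos_of_ne_zero hc)
    omega
  subst hδ hε
  simp only [Nat.zero_mul, Nat.add_zero, Nat.mul_zero] at heq
  have hγ1 : γ ≤ 1 := by
    by_contra hc
    have h' : 2 * C ≤ γ * C := Nat.mul_le_mul_right C (by omega)
    omega
  rcases (by omega : γ = 0 ∨ γ = 1) with rfl | rfl
  · exfalso
    simp only [Nat.zero_mul, Nat.add_zero] at heq
    -- heq : α*A + β*A + β*n = C,  C = q*n+1,  n ∣ LHS ⇒ n ∣ 1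
    have key : (α * a + β * a + β) * n = q * n + 1 := by
      calc (α * a + β * a + β) * n = α * (a * n) + β * (a * n) + β * n := by ring
        _ = α * A + β * A + β * n := by rw [← ha]
        _ = C := heq
        _ = q * n + 1 := hq
    have hd : n ∣ 1 := by
      have h1' : n ∣ (α * a + β * a + β) * n := dvd_mul_left n _
      have h2' : n ∣ q * n := dvd_mul_left n q
      exact (Nat.dvd_add_right h2').mp (key ▸ h1')
    have := Nat.le_of_dvd one_pos hd
    omega
  · have hαA : α * A = 0 := by omega
    have hβn : β * n = 0 := by omega
    have hα : α = 0 := by rcases Nat.mul_eq_zero.mp hαA with h | h <;> omega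
    have hβ : β = 0 := by rcases Nat.mul_eq_zero.mp hβn with h | h <;> omega
    exact ⟨hα, hβ, rfl, rfl, rfl⟩

lemma classD (hn : 3 ≤ n) (ht : n + 1 ≤ t) (h1 : n < A) (h2 : A + n < C)
    (h4 : ∃ a, A = a * n) (h5 : ∃ q, C = q * n + 1)
    (h6 : E + C = t * A) (h7 : n * C = t * A + n)
    (α β γ δ ε : ℕ)
    (heq : α * A + β * A + β * n + γ * C + δ * C + δ * n + ε * E = C + n) :
    α = 0 ∧ β = 0 ∧ γ = 0 ∧ δ = 1 ∧ ε = 0 := by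
  obtain ⟨t4, hC3, hE2⟩ := derived hn ht h1 h2 h6 h7
  obtain ⟨a, ha⟩ := h4
  obtain ⟨q, hq⟩ := h5
  have hε : ε = 0 := by
    by_contra hc
    have h' : E ≤ ε * E := Nat.le_mul_of_pos_left _ (Nat.pos_of_ne_zero hc)
    omega
  subst hε
  simp only [Nat.zero_mul, Nat.add_zero, Nat.mul_zero] at heq
  have hδ1 : δ ≤ 1 := by
    by_contra hc
    have h' : 2 * C ≤ δ * C := Nat.mul_le_mul_right C (by omega)
    omega
  rcases (by omega : δ = 0 ∨ δ = 1) with rfl | rfl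
  · exfalso
    simp only [Nat.zero_mul, Nat.add_zero] at heq
    -- heq : α*A + β*A + β*n + γ*C = C + n
    have hγ1 : γ ≤ 1 := by
      by_contra hc
      have h' : 2 * C ≤ γ * C := Nat.mul_le_mul_right C (by omega)
      omega
    rcases (by omega : γ = 0 ∨ γ = 1) with rfl | rfl
    · simp only [Nat.zero_mul, Nat.add_zero] at heq
      -- heq : α*A + β*A + β*n = C + n ⇒ n ∣ 1
      have key : (α * a + β * a + β) * n = q * n + n + 1 := by
        calc (α * a + β * a + β) * n = α * (a * n) + β * (a * n) + β * n := by ring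
          _ = α * A + β * A + β * n := by rw [← ha]
          _ = C + n := heq
          _ = q * n + n + 1 := by rw [hq]; ring
      have key' : (α * a + β * a + β) * n = (q * n + n) + 1 := by omega
      have hd : n ∣ 1 := by
        have h1' : n ∣ (α * a + β * a + β) * n := dvd_mul_left n _
        have h2' : n ∣ q * n + n := dvd_add (dvd_mul_left n q) dvd_rfl
        exact (Nat.dvd_add_right h2').mp (key' ▸ h1')
      have := Nat.le_of_dvd one_pos hd
      omega
    · -- heq : α*A + β*A + β*n + C = C + n ⇒ α*A + β*A + β*n = n
      have hα : α = 0 := by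
        by_contra hc
        have h' : A ≤ α * A := Nat.le_mul_of_pos_left _ (Nat.pos_of_ne_zero hc)
        omega
      have hβ : β = 0 := by
        by_contra hc
        have h' : A ≤ β * A := Nat.le_mul_of_pos_left _ (Nat.pos_of_ne_zero hc)
        omega
      subst hα hβ
      simp only [Nat.zero_mul, Nat.add_zero, Nat.zero_add] at heq
      omega
  · have hαA : α * A = 0 := by omega
    have hβn : β * n = 0 := by omega
    have hγC : γ * C = 0 := by omega
    have hα : α = 0 := by rcases Nat.mul_eq_zero.mp hαA with h | h <;> omega
    have hβ : β = 0 := by rcases Nat.mul_eq_zero.mp hβn with h | h <;> omega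
    have hγ : γ = 0 := by rcases Nat.mul_eq_zero.mp hγC with h | h <;> omega
    exact ⟨hα, hβ, hγ, rfl, rfl⟩

lemma classE (hn : 3 ≤ n) (ht : n + 1 ≤ t) (h1 : n < A) (h2 : A + n < C)
    (h4 : ∃ a, A = a * n) (h5 : ∃ q, C = q * n + 1)
    (h6 : E + C = t * A) (h7 : n * C = t * A + n)
    (α β γ δ ε : ℕ)
    (heq : α * A + β * A + β * n + γ * C + δ * C + δ * n + ε * E = E) :
    α = 0 ∧ β = 0 ∧ γ = 0 ∧ δ = 0 ∧ ε = 1 := by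
  obtain ⟨t4, hC3, hE2⟩ := derived hn ht h1 h2 h6 h7
  obtain ⟨a, ha⟩ := h4
  obtain ⟨q, hq⟩ := h5
  have hε1 : ε ≤ 1 := by
    by_contra hc
    have h' : 2 * E ≤ ε * E := Nat.mul_le_mul_right E (by omega)
    omega
  rcases (by omega : ε = 0 ∨ ε = 1) with rfl | rfl
  · exfalso
    simp only [Nat.zero_mul, Nat.add_zero] at heq
    -- heq : α*A + β*A + β*n + γ*C + δ*C + δ*n = E
    have hexp : (γ + δ + 1) * C = γ * C + δ * C + C := by ring
    have hlt : (γ + δ + 1) * C < n * C := by omega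
    have hltn : γ + δ + 1 < n := Nat.lt_of_mul_lt_mul_right hlt
    have key : (α * a + β * a + β + γ * q + δ * q + δ + q) * n + (γ + δ + 1)
        = (t * a) * n := by
      calc (α * a + β * a + β + γ * q + δ * q + δ + q) * n + (γ + δ + 1)
          = α * (a * n) + β * (a * n) + β * n + γ * (q * n + 1) + δ * (q * n + 1)
            + δ * n + (q * n + 1) := by ring
        _ = α * A + β * A + β * n + γ * C + δ * C + δ * n + C := by rw [← ha, ← hq]
        _ = E + C := by omega
        _ = t * A := h6
        _ = (t * a) * n := by rw [ha]; ring
    have hd : n ∣ γ + δ + 1 := by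
      have h1' : n ∣ (α * a + β * a + β + γ * q + δ * q + δ + q) * n := dvd_mul_left n _
      have h2' : n ∣ (t * a) * n := dvd_mul_left n _
      exact (Nat.dvd_add_right h1').mp (key ▸ h2')
    have := Nat.le_of_dvd (by omega) hd
    omega
  · have h9 : α * A + β * A + β * n + γ * C + δ * C + δ * n = 0 := by omega
    have hα : α = 0 := by rcases Nat.mul_eq_zero.mp (show α * A = 0 by omega) with h | h <;> omega
    have hβ : β = 0 := by rcases Nat.mul_eq_zero.mp (show β * n = 0 by omega) with h | h <;> omega
    have hγ : γ = 0 := by rcases Nat.mul_eq_zero.mp (show γ * C = 0 by omega) with h | h <;> omega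
    have hδ : δ = 0 := by rcases Nat.mul_eq_zero.mp (show δ * n = 0 by omega) with h | h <;> omega
    exact ⟨hα, hβ, hγ, hδ, rfl⟩

lemma classMain (hn : 3 ≤ n) (ht : n + 1 ≤ t) (h1 : n < A) (h2 : A + n < C)
    (h3 : t * n ≤ A) (h4 : ∃ a, A = a * n) (h5 : ∃ q, C = q * n + 1)
    (h6 : E + C = t * A) (h7 : n * C = t * A + n) (h8 : 2 * C + n < t * A)
    (α β γ δ ε : ℕ)
    (heq : α * A + β * A + β * n + γ * C + δ * C + δ * n + ε * E = n * C) :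
    (α = 0 ∧ β = 0 ∧ γ = n ∧ δ = 0 ∧ ε = 0) ∨
    (α = t - 1 ∧ β = 1 ∧ γ = 0 ∧ δ = 0 ∧ ε = 0) ∨
    (α = 0 ∧ β = 0 ∧ γ = 0 ∧ δ = 1 ∧ ε = 1) := by
  obtain ⟨t4, hC3, hE2⟩ := derived hn ht h1 h2 h6 h7
  obtain ⟨a, ha⟩ := h4
  obtain ⟨q, hq⟩ := h5
  have hε1 : ε ≤ 1 := by
    by_contra hc
    have h' : 2 * E ≤ ε * E := Nat.mul_le_mul_right E (by omega)
    omega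
  rcases (by omega : ε = 0 ∨ ε = 1) with rfl | rfl
  · -- ε = 0
    simp only [Nat.zero_mul, Nat.add_zero] at heq
    have hgd : (γ + δ) * C = γ * C + δ * C := by ring
    have hgdn : γ + δ ≤ n := by
      have h' : (γ + δ) * C ≤ n * C := by omega
      exact Nat.le_of_mul_le_mul_right h' (by omega)
    have key : (α * a + β * a + β + γ * q + δ * q + δ) * n + (γ + δ) = (n * q + 1) * n := by
      calc (α * a + β * a + β + γ * q + δ * q + δ) * n + (γ + δ)
          = α * (a * n) + β * (a * n) + β * n + γ * (q * n + 1) + δ * (q * n + 1)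
            + δ * n := by ring
        _ = α * A + β * A + β * n + γ * C + δ * C + δ * n := by rw [← ha, ← hq]
        _ = n * C := heq
        _ = (n * q + 1) * n := by rw [hq]; ring
    have hdvd : n ∣ γ + δ := by
      have h1' : n ∣ (α * a + β * a + β + γ * q + δ * q + δ) * n := dvd_mul_left n _
      have h2' : n ∣ (n * q + 1) * n := dvd_mul_left n _
      exact (Nat.dvd_add_right h1').mp (key ▸ h2')
    rcases Nat.eq_zero_or_pos (γ + δ) with h0 | hpos
    · -- γ = δ = 0
      have hγ : γ = 0 := by omega
      have hδ : δ = 0 := by omega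
      subst hγ hδ
      simp only [Nat.zero_mul, Nat.add_zero] at heq
      -- heq : α*A + β*A + β*n = n*C = t*A + n
      have hab : (α + β) * A = α * A + β * A := by ring
      rcases Nat.lt_trichotomy (α + β) t with hlt | heqt | hgt
      · exfalso
        have hx1 : (α + β + 1) * A ≤ t * A := Nat.mul_le_mul_right A (by omega)
        have hx2 : (α + β + 1) * A = α * A + β * A + A := by ring
        have hx3 : β * n ≤ (α + β) * n := Nat.mul_le_mul_right n (by omega)
        have hx4 : (α + β + 1) * n ≤ t * n := Nat.mul_le_mul_right n (by omega)
        have hx5 : (α + β + 1) * n = (α + β) * n + n := by ring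
        omega
      · have hx : (α + β) * A = t * A := by rw [heqt]
        have hβn : β * n = 1 * n := by omega
        have hβ : β = 1 := Nat.eq_of_mul_eq_mul_right (by omega) hβn
        refine Or.inr (Or.inl ⟨by omega, hβ, rfl, rfl, rfl⟩)
      · exfalso
        have hx1 : (t + 1) * A ≤ (α + β) * A := Nat.mul_le_mul_right A (by omega)
        have hx2 : (t + 1) * A = t * A + A := by ring
        omega
    · -- γ + δ = n
      have hgdeq : γ + δ = n := by have := Nat.le_of_dvd hpos hdvd; omega
      have hx : (γ + δ) * C = n * C := by rw [hgdeq]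
      have hα : α = 0 := by
        rcases Nat.mul_eq_zero.mp (show α * A = 0 by omega) with h | h <;> omega
      have hβ : β = 0 := by
        rcases Nat.mul_eq_zero.mp (show β * n = 0 by omega) with h | h <;> omega
      have hδ : δ = 0 := by
        rcases Nat.mul_eq_zero.mp (show δ * n = 0 by omega) with h | h <;> omega
      exact Or.inl ⟨hα, hβ, by omega, hδ, rfl⟩
  · -- ε = 1
    have h9 : α * A + β * A + β * n + γ * C + δ * C + δ * n = C + n := by omega
    have hδ1 : δ ≤ 1 := by
      by_contra hc
      have h' : 2 * C ≤ δ * C := Nat.mul_le_mul_right C (by omega)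
      omega
    rcases (by omega : δ = 0 ∨ δ = 1) with rfl | rfl
    · exfalso
      simp only [Nat.zero_mul, Nat.add_zero] at h9
      have hγ1 : γ ≤ 1 := by
        by_contra hc
        have h' : 2 * C ≤ γ * C := Nat.mul_le_mul_right C (by omega)
        omega
      rcases (by omega : γ = 0 ∨ γ = 1) with rfl | rfl
      · simp only [Nat.zero_mul, Nat.add_zero] at h9
        have key : (α * a + β * a + β) * n = (q * n + n) + 1 := by
          have : (α * a + β * a + β) * n = q * n + n + 1 := by
            calc (α * a + β * a + β) * n = α * (a * n) + β * (a * n) + β * n := by ring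
              _ = α * A + β * A + β * n := by rw [← ha]
              _ = C + n := h9
              _ = q * n + n + 1 := by rw [hq]; ring
          omega
        have hd : n ∣ 1 := by
          have h1' : n ∣ (α * a + β * a + β) * n := dvd_mul_left n _
          have h2' : n ∣ q * n + n := dvd_add (dvd_mul_left n q) dvd_rfl
          exact (Nat.dvd_add_right h2').mp (key ▸ h1')
        have := Nat.le_of_dvd one_pos hd
        omega
      · have hα : α = 0 := by
          by_contra hc
          have h' : A ≤ α * A := Nat.le_mul_of_pos_left _ (Nat.pos_of_ne_zero hc)
          omega
        have hβ : β = 0 := by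
          by_contra hc
          have h' : A ≤ β * A := Nat.le_mul_of_pos_left _ (Nat.pos_of_ne_zero hc)
          omega
        subst hα hβ
        simp only [Nat.zero_mul, Nat.add_zero, Nat.zero_add] at h9
        omega
    · have hα : α = 0 := by
        rcases Nat.mul_eq_zero.mp (show α * A = 0 by omega) with h | h <;> omega
      have hβ : β = 0 := by
        rcases Nat.mul_eq_zero.mp (show β * n = 0 by omega) with h | h <;> omega
      have hγ : γ = 0 := by
        rcases Nat.mul_eq_zero.mp (show γ * C = 0 by omega) with h | h <;> omega
      exact Or.inr (Or.inr ⟨hα, hβ, hγ, rfl, rfl⟩)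

end Abstract

lemma concrete_facts (n t : ℕ) (hn : 3 ≤ n) (ht : n + 1 ≤ t) :
    n < t * n ^ 2 ∧ t * n ^ 2 + n < t ^ 2 * n + 1 ∧ t * n ≤ t * n ^ 2 ∧
    (t ^ 2 * n ^ 2 - t ^ 2 * n - 1) + (t ^ 2 * n + 1) = t * (t * n ^ 2) ∧
    n * (t ^ 2 * n + 1) = t * (t * n ^ 2) + n ∧
    2 * (t ^ 2 * n + 1) + n < t * (t * n ^ 2) ∧
    0 < t ^ 2 * n ^ 2 - t ^ 2 * n - 1 := by
  have e0 : t * n ^ 2 = t * n * n := by ring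
  have e1 : t * n * 1 ≤ t * n * n := Nat.mul_le_mul_left (t * n) (by omega)
  have e2 : 2 * n ≤ t * n := Nat.mul_le_mul_right n (by omega)
  have e3 : (n + 1) * (t * n) ≤ t * (t * n) := Nat.mul_le_mul_right (t * n) ht
  have e4 : (n + 1) * (t * n) = t * n ^ 2 + t * n := by ring
  have e5 : t * (t * n) = t ^ 2 * n := by ring
  have e6 : t ^ 2 * n * 3 ≤ t ^ 2 * n * n := Nat.mul_le_mul_left _ hn
  have e7 : t ^ 2 * n ^ 2 = t ^ 2 * n * n := by ring
  have e8 : t * (t * n ^ 2) = t ^ 2 * n ^ 2 := by ring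
  have e9 : 0 < t ^ 2 * n :=
    Nat.mul_pos (pow_pos (show 0 < t by omega) 2) (show 0 < n by omega)
  have f1 : 4 * 4 ≤ t * t := Nat.mul_le_mul (by omega) (by omega)
  have f2 : t ^ 2 = t * t := by ring
  have f3 : 16 * n ≤ t ^ 2 * n := Nat.mul_le_mul_right n (by omega)
  refine ⟨by omega, by omega, by omega, by omega, by ring, by omega, by omega⟩

lemma memT_iff (n t x : ℕ) :
    x ∈ AddSubmonoid.closure
        ({t * n ^ 2, t * n ^ 2 + n, t ^ 2 * n + 1, t ^ 2 * n + n + 1,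
          t ^ 2 * n ^ 2 - t ^ 2 * n - 1} : Set ℕ) ↔
    ∃ α β γ δ ε : ℕ,
      α * (t * n ^ 2) + β * (t * n ^ 2 + n) + γ * (t ^ 2 * n + 1) +
        δ * (t ^ 2 * n + n + 1) + ε * (t ^ 2 * n ^ 2 - t ^ 2 * n - 1) = x := by
  constructor
  · intro hx
    induction hx using AddSubmonoid.closure_induction with
    | mem y hy =>
      simp only [Set.mem_insert_iff, Set.mem_singleton_iff] at hy
      rcases hy with rfl | rfl | rfl | rfl | rfl
      · exact ⟨1, 0, 0, 0, 0, by ring⟩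
      · exact ⟨0, 1, 0, 0, 0, by ring⟩
      · exact ⟨0, 0, 1, 0, 0, by ring⟩
      · exact ⟨0, 0, 0, 1, 0, by ring⟩
      · exact ⟨0, 0, 0, 0, 1, by ring⟩
    | zero => exact ⟨0, 0, 0, 0, 0, by ring⟩
    | add x y hx hy ihx ihy =>
      obtain ⟨a1, b1, c1, d1, e1, h1⟩ := ihx
      obtain ⟨a2, b2, c2, d2, e2, h2⟩ := ihy
      exact ⟨a1 + a2, b1 + b2, c1 + c2, d1 + d2, e1 + e2, by rw [← h1, ← h2]; ring⟩
  · rintro ⟨α, β, γ, δ, ε, rfl⟩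
    have m : ∀ y ∈ ({t * n ^ 2, t * n ^ 2 + n, t ^ 2 * n + 1, t ^ 2 * n + n + 1,
          t ^ 2 * n ^ 2 - t ^ 2 * n - 1} : Set ℕ), ∀ k : ℕ,
        k * y ∈ AddSubmonoid.closure
          ({t * n ^ 2, t * n ^ 2 + n, t ^ 2 * n + 1, t ^ 2 * n + n + 1,
            t ^ 2 * n ^ 2 - t ^ 2 * n - 1} : Set ℕ) := by
      intro y hy k
      simpa [nsmul_eq_mul] using
        AddSubmonoid.nsmul_mem _ (AddSubmonoid.subset_closure hy) k
    refine add_mem (add_mem (add_mem (add_mem ?_ ?_) ?_) ?_) ?_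
    · exact m _ (by simp) α
    · exact m _ (by simp) β
    · exact m _ (by simp) γ
    · exact m _ (by simp) δ
    · exact m _ (by simp) ε

-- positivity of a representation with a positive coefficient
lemma rep_pos (n t : ℕ) (hn : 3 ≤ n) (ht : n + 1 ≤ t) (α β γ δ ε : ℕ)
    (h : 1 ≤ α + β + γ + δ + ε) :
    0 < α * (t * n ^ 2) + β * (t * n ^ 2 + n) + γ * (t ^ 2 * n + 1) +
      δ * (t ^ 2 * n + n + 1) + ε * (t ^ 2 * n ^ 2 - t ^ 2 * n - 1) := by
  obtain ⟨f1, f2, f3, f6, f7, f8, f9⟩ := concrete_facts n t hn ht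
  have p1 : α * 1 ≤ α * (t * n ^ 2) := Nat.mul_le_mul_left α (by omega)
  have p2 : β * 1 ≤ β * (t * n ^ 2 + n) := Nat.mul_le_mul_left β (by omega)
  have p3 : γ * 1 ≤ γ * (t ^ 2 * n + 1) := Nat.mul_le_mul_left γ (by omega)
  have p4 : δ * 1 ≤ δ * (t ^ 2 * n + n + 1) := Nat.mul_le_mul_left δ (by omega)
  have p5 : ε * 1 ≤ ε * (t ^ 2 * n ^ 2 - t ^ 2 * n - 1) := Nat.mul_le_mul_left ε (by omega)
  omega

/-- every representation of a generator is the trivial one (coefficient sum 1) -/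
lemma uniq_gen (n t : ℕ) (hn : 3 ≤ n) (ht : n + 1 ≤ t) (y : ℕ)
    (hy : y ∈ ({t * n ^ 2, t * n ^ 2 + n, t ^ 2 * n + 1, t ^ 2 * n + n + 1,
          t ^ 2 * n ^ 2 - t ^ 2 * n - 1} : Set ℕ))
    (α β γ δ ε : ℕ)
    (heq : α * (t * n ^ 2) + β * (t * n ^ 2 + n) + γ * (t ^ 2 * n + 1) +
      δ * (t ^ 2 * n + n + 1) + ε * (t ^ 2 * n ^ 2 - t ^ 2 * n - 1) = y) :
    α + β + γ + δ + ε = 1 := by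
  obtain ⟨f1, f2, f3, f6, f7, f8, f9⟩ := concrete_facts n t hn ht
  have conv : α * (t * n ^ 2) + β * (t * n ^ 2) + β * n + γ * (t ^ 2 * n + 1) +
      δ * (t ^ 2 * n + 1) + δ * n + ε * (t ^ 2 * n ^ 2 - t ^ 2 * n - 1) =
      α * (t * n ^ 2) + β * (t * n ^ 2 + n) + γ * (t ^ 2 * n + 1) +
      δ * (t ^ 2 * n + n + 1) + ε * (t ^ 2 * n ^ 2 - t ^ 2 * n - 1) := by ring
  simp only [Set.mem_insert_iff, Set.mem_singleton_iff] at hy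
  rcases hy with rfl | rfl | rfl | rfl | rfl
  · obtain ⟨h1, h2, h3, h4, h5⟩ := classA hn ht f1 f2 f6 f7 α β γ δ ε (by omega)
    omega
  · obtain ⟨h1, h2, h3, h4, h5⟩ := classB hn ht f1 f2 f6 f7 α β γ δ ε (by omega)
    omega
  · obtain ⟨h1, h2, h3, h4, h5⟩ := classC hn ht f1 f2 ⟨t * n, by ring⟩ ⟨t ^ 2, rfl⟩
      f6 f7 α β γ δ ε (by omega)
    omega
  · obtain ⟨h1, h2, h3, h4, h5⟩ := classD hn ht f1 f2 ⟨t * n, by ring⟩ ⟨t ^ 2, rfl⟩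
      f6 f7 α β γ δ ε (by omega)
    omega
  · obtain ⟨h1, h2, h3, h4, h5⟩ := classE hn ht f1 f2 ⟨t * n, by ring⟩ ⟨t ^ 2, rfl⟩
      f6 f7 α β γ δ ε (by omega)
    omega

lemma gen_atom (n t : ℕ) (hn : 3 ≤ n) (ht : n + 1 ≤ t) (y : ℕ)
    (hy : y ∈ ({t * n ^ 2, t * n ^ 2 + n, t ^ 2 * n + 1, t ^ 2 * n + n + 1,
          t ^ 2 * n ^ 2 - t ^ 2 * n - 1} : Set ℕ)) :
    NumAtom (AddSubmonoid.closure
        ({t * n ^ 2, t * n ^ 2 + n, t ^ 2 * n + 1, t ^ 2 * n + n + 1,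
          t ^ 2 * n ^ 2 - t ^ 2 * n - 1} : Set ℕ)) y := by
  obtain ⟨f1, f2, f3, f6, f7, f8, f9⟩ := concrete_facts n t hn ht
  have hy0 : y ≠ 0 := by
    simp only [Set.mem_insert_iff, Set.mem_singleton_iff] at hy
    rcases hy with rfl | rfl | rfl | rfl | rfl <;> omega
  refine ⟨AddSubmonoid.subset_closure hy, hy0, ?_⟩
  rintro ⟨b, c, hb, hc, hb0, hc0, hbc⟩
  obtain ⟨a1, b1, c1, d1, e1, r1⟩ := (memT_iff n t b).mp hb
  obtain ⟨a2, b2, c2, d2, e2, r2⟩ := (memT_iff n t c).mp hc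
  have hs1 : 1 ≤ a1 + b1 + c1 + d1 + e1 := by
    by_contra hk
    have : a1 = 0 ∧ b1 = 0 ∧ c1 = 0 ∧ d1 = 0 ∧ e1 = 0 := by omega
    obtain ⟨rfl, rfl, rfl, rfl, rfl⟩ := this
    simp at r1
    exact hb0 r1.symm
  have hs2 : 1 ≤ a2 + b2 + c2 + d2 + e2 := by
    by_contra hk
    have : a2 = 0 ∧ b2 = 0 ∧ c2 = 0 ∧ d2 = 0 ∧ e2 = 0 := by omega
    obtain ⟨rfl, rfl, rfl, rfl, rfl⟩ := this
    simp at r2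
    exact hc0 r2.symm
  have comb : (a1 + a2) * (t * n ^ 2) + (b1 + b2) * (t * n ^ 2 + n) +
      (c1 + c2) * (t ^ 2 * n + 1) + (d1 + d2) * (t ^ 2 * n + n + 1) +
      (e1 + e2) * (t ^ 2 * n ^ 2 - t ^ 2 * n - 1) = y := by
    rw [hbc, ← r1, ← r2]; ring
  have := uniq_gen n t hn ht y hy _ _ _ _ _ comb
  omega

lemma atom_mem_gen (n t : ℕ) (hn : 3 ≤ n) (ht : n + 1 ≤ t) (y : ℕ)
    (hy : NumAtom (AddSubmonoid.closure
        ({t * n ^ 2, t * n ^ 2 + n, t ^ 2 * n + 1, t ^ 2 * n + n + 1,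
          t ^ 2 * n ^ 2 - t ^ 2 * n - 1} : Set ℕ)) y) :
    y ∈ ({t * n ^ 2, t * n ^ 2 + n, t ^ 2 * n + 1, t ^ 2 * n + n + 1,
          t ^ 2 * n ^ 2 - t ^ 2 * n - 1} : Set ℕ) := by
  obtain ⟨f1, f2, f3, f6, f7, f8, f9⟩ := concrete_facts n t hn ht
  obtain ⟨hmem, hy0, hnot⟩ := hy
  obtain ⟨α, β, γ, δ, ε, hrep⟩ := (memT_iff n t y).mp hmem
  rcases (by omega : α + β + γ + δ + ε = 0 ∨ α + β + γ + δ + ε = 1 ∨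
      2 ≤ α + β + γ + δ + ε) with h0 | h1 | h2
  · exfalso
    obtain ⟨rfl, rfl, rfl, rfl, rfl⟩ :
        α = 0 ∧ β = 0 ∧ γ = 0 ∧ δ = 0 ∧ ε = 0 := by omega
    simp at hrep
    exact hy0 hrep.symm
  · rcases (by omega : (α = 1 ∧ β = 0 ∧ γ = 0 ∧ δ = 0 ∧ ε = 0) ∨
        (α = 0 ∧ β = 1 ∧ γ = 0 ∧ δ = 0 ∧ ε = 0) ∨
        (α = 0 ∧ β = 0 ∧ γ = 1 ∧ δ = 0 ∧ ε = 0) ∨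
        (α = 0 ∧ β = 0 ∧ γ = 0 ∧ δ = 1 ∧ ε = 0) ∨
        (α = 0 ∧ β = 0 ∧ γ = 0 ∧ δ = 0 ∧ ε = 1)) with
      ⟨rfl,rfl,rfl,rfl,rfl⟩ | ⟨rfl,rfl,rfl,rfl,rfl⟩ | ⟨rfl,rfl,rfl,rfl,rfl⟩ |
      ⟨rfl,rfl,rfl,rfl,rfl⟩ | ⟨rfl,rfl,rfl,rfl,rfl⟩ <;>
      simp at hrep <;> simp [← hrep]
  · exfalso
    apply hnot
    rcases (by omega : 1 ≤ α ∨ 1 ≤ β ∨ 1 ≤ γ ∨ 1 ≤ δ ∨ 1 ≤ ε) with h | h | h | h | h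
    · obtain ⟨α', rfl⟩ : ∃ α', α = α' + 1 := ⟨α - 1, by omega⟩
      refine ⟨t * n ^ 2, α' * (t * n ^ 2) + β * (t * n ^ 2 + n) + γ * (t ^ 2 * n + 1) +
        δ * (t ^ 2 * n + n + 1) + ε * (t ^ 2 * n ^ 2 - t ^ 2 * n - 1),
        AddSubmonoid.subset_closure (by simp), (memT_iff n t _).mpr ⟨α', β, γ, δ, ε, rfl⟩,
        by omega, Nat.pos_iff_ne_zero.mp (rep_pos n t hn ht α' β γ δ ε (by omega)), by rw [← hrep]; ring⟩
    · obtain ⟨β', rfl⟩ : ∃ β', β = β' + 1 := ⟨β - 1, by omega⟩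
      refine ⟨t * n ^ 2 + n, α * (t * n ^ 2) + β' * (t * n ^ 2 + n) + γ * (t ^ 2 * n + 1) +
        δ * (t ^ 2 * n + n + 1) + ε * (t ^ 2 * n ^ 2 - t ^ 2 * n - 1),
        AddSubmonoid.subset_closure (by simp), (memT_iff n t _).mpr ⟨α, β', γ, δ, ε, rfl⟩,
        by omega, Nat.pos_iff_ne_zero.mp (rep_pos n t hn ht α β' γ δ ε (by omega)), by rw [← hrep]; ring⟩
    · obtain ⟨γ', rfl⟩ : ∃ γ', γ = γ' + 1 := ⟨γ - 1, by omega⟩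
      refine ⟨t ^ 2 * n + 1, α * (t * n ^ 2) + β * (t * n ^ 2 + n) + γ' * (t ^ 2 * n + 1) +
        δ * (t ^ 2 * n + n + 1) + ε * (t ^ 2 * n ^ 2 - t ^ 2 * n - 1),
        AddSubmonoid.subset_closure (by simp), (memT_iff n t _).mpr ⟨α, β, γ', δ, ε, rfl⟩,
        by omega, Nat.pos_iff_ne_zero.mp (rep_pos n t hn ht α β γ' δ ε (by omega)), by rw [← hrep]; ring⟩
    · obtain ⟨δ', rfl⟩ : ∃ δ', δ = δ' + 1 := ⟨δ - 1, by omega⟩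
      refine ⟨t ^ 2 * n + n + 1, α * (t * n ^ 2) + β * (t * n ^ 2 + n) + γ * (t ^ 2 * n + 1) +
        δ' * (t ^ 2 * n + n + 1) + ε * (t ^ 2 * n ^ 2 - t ^ 2 * n - 1),
        AddSubmonoid.subset_closure (by simp), (memT_iff n t _).mpr ⟨α, β, γ, δ', ε, rfl⟩,
        by omega, Nat.pos_iff_ne_zero.mp (rep_pos n t hn ht α β γ δ' ε (by omega)), by rw [← hrep]; ring⟩
    · obtain ⟨ε', rfl⟩ : ∃ ε', ε = ε' + 1 := ⟨ε - 1, by omega⟩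
      refine ⟨t ^ 2 * n ^ 2 - t ^ 2 * n - 1, α * (t * n ^ 2) + β * (t * n ^ 2 + n) +
        γ * (t ^ 2 * n + 1) + δ * (t ^ 2 * n + n + 1) +
        ε' * (t ^ 2 * n ^ 2 - t ^ 2 * n - 1),
        AddSubmonoid.subset_closure (by simp), (memT_iff n t _).mpr ⟨α, β, γ, δ, ε', rfl⟩,
        by omega, Nat.pos_iff_ne_zero.mp (rep_pos n t hn ht α β γ δ ε' (by omega)), by rw [← hrep]; ring⟩

lemma part1' (n t : ℕ) (hn : 3 ≤ n) (ht : n + 1 ≤ t) (α β γ δ ε : ℕ)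
    (heq : α * (t * n ^ 2) + β * (t * n ^ 2 + n) + γ * (t ^ 2 * n + 1) +
      δ * (t ^ 2 * n + n + 1) + ε * (t ^ 2 * n ^ 2 - t ^ 2 * n - 1) =
      t ^ 2 * n ^ 2 + n) :
    (α = 0 ∧ β = 0 ∧ γ = n ∧ δ = 0 ∧ ε = 0) ∨
    (α = t - 1 ∧ β = 1 ∧ γ = 0 ∧ δ = 0 ∧ ε = 0) ∨
    (α = 0 ∧ β = 0 ∧ γ = 0 ∧ δ = 1 ∧ ε = 1) := by
  obtain ⟨f1, f2, f3, f6, f7, f8, f9⟩ := concrete_facts n t hn ht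
  refine classMain hn ht f1 f2 f3 ⟨t * n, by ring⟩ ⟨t ^ 2, rfl⟩ f6 f7 f8 α β γ δ ε ?_
  have e8 : t * (t * n ^ 2) = t ^ 2 * n ^ 2 := by ring
  have conv : α * (t * n ^ 2) + β * (t * n ^ 2) + β * n + γ * (t ^ 2 * n + 1) +
      δ * (t ^ 2 * n + 1) + δ * n + ε * (t ^ 2 * n ^ 2 - t ^ 2 * n - 1) =
      α * (t * n ^ 2) + β * (t * n ^ 2 + n) + γ * (t ^ 2 * n + 1) +
      δ * (t ^ 2 * n + n + 1) + ε * (t ^ 2 * n ^ 2 - t ^ 2 * n - 1) := by ring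
  omega

lemma multiset_rep (n t : ℕ) (hn : 3 ≤ n) (ht : n + 1 ≤ t) (s : Multiset ℕ)
    (hs : ∀ a ∈ s, NumAtom (AddSubmonoid.closure
        ({t * n ^ 2, t * n ^ 2 + n, t ^ 2 * n + 1, t ^ 2 * n + n + 1,
          t ^ 2 * n ^ 2 - t ^ 2 * n - 1} : Set ℕ)) a) :
    ∃ α β γ δ ε : ℕ, α + β + γ + δ + ε = Multiset.card s ∧
      α * (t * n ^ 2) + β * (t * n ^ 2 + n) + γ * (t ^ 2 * n + 1) +
        δ * (t ^ 2 * n + n + 1) + ε * (t ^ 2 * n ^ 2 - t ^ 2 * n - 1) = s.sum := by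
  induction s using Multiset.induction_on with
  | empty => exact ⟨0, 0, 0, 0, 0, by simp, by simp⟩
  | cons a s ih =>
    obtain ⟨α, β, γ, δ, ε, h1, h2⟩ := ih (fun x hx => hs x (Multiset.mem_cons_of_mem hx))
    have ha := atom_mem_gen n t hn ht a (hs a (Multiset.mem_cons_self a s))
    simp only [Set.mem_insert_iff, Set.mem_singleton_iff] at ha
    rcases ha with rfl | rfl | rfl | rfl | rfl
    · exact ⟨α + 1, β, γ, δ, ε, by rw [Multiset.card_cons]; omega,
        by rw [Multiset.sum_cons, ← h2]; ring⟩
    · exact ⟨α, β + 1, γ, δ, ε, by rw [Multiset.card_cons]; omega,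
        by rw [Multiset.sum_cons, ← h2]; ring⟩
    · exact ⟨α, β, γ + 1, δ, ε, by rw [Multiset.card_cons]; omega,
        by rw [Multiset.sum_cons, ← h2]; ring⟩
    · exact ⟨α, β, γ, δ + 1, ε, by rw [Multiset.card_cons]; omega,
        by rw [Multiset.sum_cons, ← h2]; ring⟩
    · exact ⟨α, β, γ, δ, ε + 1, by rw [Multiset.card_cons]; omega,
        by rw [Multiset.sum_cons, ← h2]; ring⟩

theorem stmt_12 (n t : ℕ) (hn : 3 ≤ n) (ht : n + 1 ≤ t) :
    (∀ α β γ δ ε : ℕ,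
      α * (t * n ^ 2) + β * (t * n ^ 2 + n) + γ * (t ^ 2 * n + 1) +
          δ * (t ^ 2 * n + n + 1) + ε * (t ^ 2 * n ^ 2 - t ^ 2 * n - 1) =
        t ^ 2 * n ^ 2 + n →
      (α, β, γ, δ, ε) = (0, 0, n, 0, 0) ∨ (α, β, γ, δ, ε) = (t - 1, 1, 0, 0, 0) ∨
        (α, β, γ, δ, ε) = (0, 0, 0, 1, 1)) ∧
    AS (AddSubmonoid.closure
        {t * n ^ 2, t * n ^ 2 + n, t ^ 2 * n + 1, t ^ 2 * n + n + 1,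
          t ^ 2 * n ^ 2 - t ^ 2 * n - 1}) (t ^ 2 * n ^ 2 + n) = {2, n, t} := by
  obtain ⟨f1, f2, f3, f6, f7, f8, f9⟩ := concrete_facts n t hn ht
  constructor
  · intro α β γ δ ε heq
    rcases part1' n t hn ht α β γ δ ε heq with
      ⟨rfl, rfl, rfl, rfl, rfl⟩ | ⟨rfl, rfl, rfl, rfl, rfl⟩ | ⟨rfl, rfl, rfl, rfl, rfl⟩
    · exact Or.inl rfl
    · exact Or.inr (Or.inl rfl)
    · exact Or.inr (Or.inr rfl)
  · apply Set.ext
    intro m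
    simp only [AS, Set.mem_setOf_eq, Set.mem_insert_iff, Set.mem_singleton_iff]
    constructor
    · rintro ⟨s, hs, hcard, hsum⟩
      obtain ⟨α, β, γ, δ, ε, h1, h2⟩ := multiset_rep n t hn ht s hs
      rw [hsum] at h2
      rcases part1' n t hn ht α β γ δ ε h2 with
        ⟨rfl, rfl, rfl, rfl, rfl⟩ | ⟨rfl, rfl, rfl, rfl, rfl⟩ | ⟨rfl, rfl, rfl, rfl, rfl⟩
      · exact Or.inr (Or.inl (by omega))
      · exact Or.inr (Or.inr (by omega))
      · exact Or.inl (by omega)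
    · rintro (rfl | hm | hm)
      · refine ⟨{t ^ 2 * n + n + 1, t ^ 2 * n ^ 2 - t ^ 2 * n - 1}, ?_, ?_, ?_⟩
        · intro a ha
          have : a = t ^ 2 * n + n + 1 ∨ a = t ^ 2 * n ^ 2 - t ^ 2 * n - 1 := by
            simpa using ha
          rcases this with rfl | rfl
          · exact gen_atom n t hn ht _ (by simp)
          · exact gen_atom n t hn ht _ (by simp)
        · rfl
        · show t ^ 2 * n + n + 1 + (t ^ 2 * n ^ 2 - t ^ 2 * n - 1 + 0) = t ^ 2 * n ^ 2 + n
          have e8 : t * (t * n ^ 2) = t ^ 2 * n ^ 2 := by ring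
          omega
      · refine ⟨Multiset.replicate n (t ^ 2 * n + 1), ?_, by simp [hm], ?_⟩
        · intro a ha
          rw [Multiset.eq_of_mem_replicate ha]
          exact gen_atom n t hn ht _ (by simp)
        · rw [Multiset.sum_replicate, smul_eq_mul]; ring
      · refine ⟨(t * n ^ 2 + n) ::ₘ Multiset.replicate (t - 1) (t * n ^ 2), ?_, ?_, ?_⟩
        · intro a ha
          rcases Multiset.mem_cons.mp ha with rfl | h
          · exact gen_atom n t hn ht _ (by simp)
          · rw [Multiset.eq_of_mem_replicate h]
            exact gen_atom n t hn ht _ (by simp)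
        · rw [Multiset.card_cons, Multiset.card_replicate]; omega
        · rw [Multiset.sum_cons, Multiset.sum_replicate, smul_eq_mul]
          obtain ⟨u, rfl⟩ : ∃ u, t = u + 1 := ⟨t - 1, by omega⟩
          simp only [Nat.add_sub_cancel]
          ring
end

section
/- Let n ≥ 3 and t ≥ n+1. Then T'' = ⟨tn², tn²+n, t²n+1⟩ is a numerical semigroup (the generators have gcd 1) and the set of lengths of factorizations of x = t²n²+n into atoms of T'' is exactly {n, t}. Explicitly, the only solutions in ℕ of α·tn² + β·(tn²+n) + γ·(t²n+1) = t²n²+n are (α,β,γ) = (0,0,n) and (t−1,1,0). -/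
lemma mem_closure_triple {a b c x : ℕ} :
    x ∈ AddSubmonoid.closure ({a,b,c} : Set ℕ) ↔ ∃ α β γ : ℕ, α*a+β*b+γ*c = x := by
  constructor
  · intro hx
    induction hx using AddSubmonoid.closure_induction with
    | mem y hy =>
      rcases hy with rfl|rfl|rfl
      · exact ⟨1,0,0, by ring⟩
      · exact ⟨0,1,0, by ring⟩
      · exact ⟨0,0,1, by ring⟩
    | zero => exact ⟨0,0,0, by ring⟩
    | add p q hp hq ihp ihq =>
      obtain ⟨a1,b1,c1,e1⟩ := ihp; obtain ⟨a2,b2,c2,e2⟩ := ihq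
      exact ⟨a1+a2,b1+b2,c1+c2, by rw [← e1, ← e2]; ring⟩
  · rintro ⟨α,β,γ,rfl⟩
    have ha : a ∈ AddSubmonoid.closure ({a,b,c} : Set ℕ) := AddSubmonoid.subset_closure (by simp)
    have hb : b ∈ AddSubmonoid.closure ({a,b,c} : Set ℕ) := AddSubmonoid.subset_closure (by simp)
    have hc : c ∈ AddSubmonoid.closure ({a,b,c} : Set ℕ) := AddSubmonoid.subset_closure (by simp)
    simpa [nsmul_eq_mul] using AddSubmonoid.add_mem _ (AddSubmonoid.add_mem _
      (AddSubmonoid.nsmul_mem _ ha α) (AddSubmonoid.nsmul_mem _ hb β)) (AddSubmonoid.nsmul_mem _ hc γ)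

lemma repnz {a b c α β γ : ℕ} (ha : 0 < a) (hb : 0 < b) (hc : 0 < c)
    (h : 1 ≤ α + β + γ) : α*a + β*b + γ*c ≠ 0 := by
  intro h0
  simp only [Nat.add_eq_zero, Nat.mul_eq_zero] at h0
  omega

lemma sum_rep (a b c : ℕ) (s : Multiset ℕ) (hs : ∀ y ∈ s, y = a ∨ y = b ∨ y = c) :
    ∃ α β γ : ℕ, Multiset.card s = α + β + γ ∧ s.sum = α*a + β*b + γ*c := by
  induction s using Multiset.induction_on with
  | empty => exact ⟨0,0,0, by simp⟩
  | cons y s ih =>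
    obtain ⟨α,β,γ,hcard,hsum⟩ := ih (fun z hz => hs z (Multiset.mem_cons_of_mem hz))
    rcases hs y (Multiset.mem_cons_self y s) with rfl|rfl|rfl
    · exact ⟨α+1,β,γ, by simp [hcard]; ring, by simp [hsum]; ring⟩
    · exact ⟨α,β+1,γ, by simp [hcard]; ring, by simp [hsum]; ring⟩
    · exact ⟨α,β,γ+1, by simp [hcard]; ring, by simp [hsum]; ring⟩

lemma key (n t : ℕ) (hn : 3 ≤ n) (ht : n + 1 ≤ t) (α β γ : ℕ)
    (h : α * (t * n ^ 2) + β * (t * n ^ 2 + n) + γ * (t ^ 2 * n + 1) = t ^ 2 * n ^ 2 + n) :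
    (α = 0 ∧ β = 0 ∧ γ = n) ∨ (α = t - 1 ∧ β = 1 ∧ γ = 0) := by
  have hn0 : 0 < n := by omega
  have ht0 : 0 < t := by omega
  have hcon : Nat.Coprime n (t^2*n+1) := by
    have e : t^2*n+1 = 1 + n*t^2 := by ring
    rw [e, Nat.coprime_add_mul_left_right n 1 (t^2)]
    exact Nat.coprime_one_right n
  have hd1 : n ∣ α * (t * n ^ 2) + β * (t * n ^ 2 + n) := ⟨α*(t*n)+β*(t*n)+β, by ring⟩
  have hd2 : n ∣ t ^ 2 * n ^ 2 + n := ⟨t^2*n+1, by ring⟩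
  have hd3 : n ∣ γ * (t ^ 2 * n + 1) := (Nat.dvd_add_right hd1).mp (h ▸ hd2)
  have hd4 : n ∣ γ := hcon.dvd_of_dvd_mul_right hd3
  have e0 : n * (t^2*n+1) = t^2*n^2+n := by ring
  have hγle : γ ≤ n := by
    have h1 : γ * (t^2*n+1) ≤ t^2*n^2+n := h ▸ Nat.le_add_left _ _
    rw [← e0] at h1
    exact Nat.le_of_mul_le_mul_right (by rwa [Nat.mul_comm γ, Nat.mul_comm n] at h1) (by positivity)
  obtain ⟨k, rfl⟩ := hd4
  have hk1 : k ≤ 1 := Nat.le_of_mul_le_mul_left (by omega : n * k ≤ n * 1) hn0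
  interval_cases k
  · -- γ = 0 case
    rw [Nat.mul_zero, Nat.zero_mul, Nat.add_zero] at h
    have h2 : ((α+β)*(t*n) + β) * n = (t^2*n+1) * n := by
      have e1 : ((α+β)*(t*n) + β) * n = α * (t * n ^ 2) + β * (t * n ^ 2 + n) := by ring
      have e2 : (t^2*n+1) * n = t^2*n^2+n := by ring
      rw [e1, e2, h]
    have h3 : (α+β)*(t*n) + β = t^2*n+1 := Nat.eq_of_mul_eq_mul_right hn0 h2
    have h4 : β % n = 1 := by
      have h4a := congrArg (· % n) h3
      rw [show (α+β)*(t*n) + β = n*((α+β)*t) + β by ring,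
          show t^2*n+1 = n*t^2 + 1 by ring, Nat.mul_add_mod, Nat.mul_add_mod] at h4a
      rw [h4a, Nat.mod_eq_of_lt (by omega)]
    have hq : β = n*(β/n) + 1 := by
      have := Nat.div_add_mod β n
      omega
    set q := β / n with hqdef
    rw [hq] at h3
    have h5 : ((α+(n*q+1))*t + q) * n + 1 = (t^2) * n + 1 := by
      have e3 : ((α+(n*q+1))*t + q) * n + 1 = (α+(n*q+1))*(t*n) + (n*q+1) := by ring
      rw [e3, h3]
    have h6 : (α+(n*q+1))*t + q = t^2 :=
      Nat.eq_of_mul_eq_mul_right hn0 (Nat.add_right_cancel h5)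
    have h7 : t ∣ q := by
      have d1 : t ∣ (α+(n*q+1))*t := ⟨α+(n*q+1), by ring⟩
      have d2 : t ∣ t^2 := ⟨t, by ring⟩
      exact (Nat.dvd_add_right d1).mp (h6 ▸ d2)
    obtain ⟨j, hj⟩ := h7
    have hj0 : j = 0 := by
      by_contra hc
      have hqt : t ≤ q := by
        calc t = t * 1 := (Nat.mul_one t).symm
        _ ≤ t * j := Nat.mul_le_mul_left t (by omega)
        _ = q := hj.symm
      have h8 : (t*n)*t ≤ (α+(n*q+1))*t :=
        Nat.mul_le_mul_right t (by calc t*n = n*t := Nat.mul_comm t n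
                                    _ ≤ n*q := Nat.mul_le_mul_left n hqt
                                    _ ≤ α+(n*q+1) := by omega)
      have h9 : (t*n)*t ≤ t^2 := le_trans h8 (le_trans (Nat.le_add_right _ q) (le_of_eq h6))
      have e4 : (t*n)*t = t^2*n := by ring
      rw [e4] at h9
      have c1 : t^2*3 ≤ t^2*n := Nat.mul_le_mul_left _ hn
      have c2 : 0 < t^2 := by positivity
      linarith
    have hq0 : q = 0 := by rw [hj, hj0, Nat.mul_zero]
    rw [hq0, Nat.mul_zero, Nat.zero_add, Nat.add_zero] at h6
    have hat : α + 1 = t := by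
      have e5 : (α+1)*t = t*t := by rw [show t*t = t^2 by ring, ← h6]
      exact Nat.eq_of_mul_eq_mul_right ht0 e5
    exact Or.inr ⟨by omega, by rw [hq, hq0, Nat.mul_zero], by rw [Nat.mul_zero]⟩
  · -- γ = n case
    left
    have e : (n*1) * (t ^ 2 * n + 1) = t ^ 2 * n ^ 2 + n := by ring
    rw [e] at h
    have hα : α * (t * n ^ 2) = 0 := by omega
    have hβ : β * (t * n ^ 2 + n) = 0 := by omega
    have e1 : t * n ^ 2 ≠ 0 := by positivity
    have e2 : t * n ^ 2 + n ≠ 0 := by positivity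
    refine ⟨?_, ?_, by ring⟩
    · rcases Nat.mul_eq_zero.mp hα with h'|h' <;> omega
    · rcases Nat.mul_eq_zero.mp hβ with h'|h' <;> omega

section
variable (n t : ℕ) (hn : 3 ≤ n) (ht : n + 1 ≤ t)
include hn ht

lemma min_elt (x : ℕ) (hx : x ∈ AddSubmonoid.closure ({t*n^2, t*n^2+n, t^2*n+1} : Set ℕ))
    (hx0 : x ≠ 0) : t*n^2 ≤ x := by
  obtain ⟨α,β,γ,hrep⟩ := mem_closure_triple.mp hx
  have hab : t*n^2 ≤ t*n^2+n := Nat.le_add_right _ _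
  have hac : t*n^2 ≤ t^2*n+1 := by
    have h1 : n*n ≤ t*n := Nat.mul_le_mul_right n (by omega)
    have h2 : t*(n*n) ≤ t*(t*n) := Nat.mul_le_mul_left t h1
    have h3 : t*(n*n) = t*n^2 := by ring
    have h4 : t*(t*n) = t^2*n := by ring
    omega
  have h1 : 1 ≤ α + β + γ := by
    by_contra hc
    push_neg at hc
    have : α = 0 ∧ β = 0 ∧ γ = 0 := by omega
    obtain ⟨rfl,rfl,rfl⟩ := this
    simp at hrep
    exact hx0 hrep.symm
  have k1 : (t*n^2) * 1 ≤ (t*n^2) * (α+β+γ) := Nat.mul_le_mul_left _ h1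
  have k2 : (t*n^2)*(α+β+γ) = α*(t*n^2) + β*(t*n^2) + γ*(t*n^2) := by ring
  have k3 : β*(t*n^2) ≤ β*(t*n^2+n) := Nat.mul_le_mul_left β hab
  have k4 : γ*(t*n^2) ≤ γ*(t^2*n+1) := Nat.mul_le_mul_left γ hac
  have k5 : (t*n^2) * 1 = t*n^2 := Nat.mul_one _
  linarith [hrep.le, hrep.ge]

lemma atom_a : NumAtom (AddSubmonoid.closure ({t*n^2, t*n^2+n, t^2*n+1} : Set ℕ)) (t*n^2) := by
  have ha0 : (0:ℕ) < t*n^2 := Nat.mul_pos (by omega) (pow_pos (by omega) 2)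
  refine ⟨AddSubmonoid.subset_closure (by simp), by omega, ?_⟩
  rintro ⟨b, c, hbT, hcT, hb0, hc0, habc⟩
  have h1 := min_elt n t hn ht b hbT hb0
  have h2 := min_elt n t hn ht c hcT hc0
  omega

lemma atom_b : NumAtom (AddSubmonoid.closure ({t*n^2, t*n^2+n, t^2*n+1} : Set ℕ)) (t*n^2+n) := by
  have ha0 : (0:ℕ) < t*n^2 := Nat.mul_pos (by omega) (pow_pos (by omega) 2)
  have hlt : n < t*n^2 := by nlinarith [ha0]
  refine ⟨AddSubmonoid.subset_closure (by simp), by omega, ?_⟩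
  rintro ⟨b, c, hbT, hcT, hb0, hc0, habc⟩
  have h1 := min_elt n t hn ht b hbT hb0
  have h2 := min_elt n t hn ht c hcT hc0
  omega

lemma atom_c : NumAtom (AddSubmonoid.closure ({t*n^2, t*n^2+n, t^2*n+1} : Set ℕ)) (t^2*n+1) := by
  refine ⟨AddSubmonoid.subset_closure (by simp), by omega, ?_⟩
  rintro ⟨b, c, hbT, hcT, hb0, hc0, habc⟩
  obtain ⟨a1,b1,g1,h1⟩ := mem_closure_triple.mp hbT
  obtain ⟨a2,b2,g2,h2⟩ := mem_closure_triple.mp hcT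
  have hg1 : g1 = 0 := by
    by_contra hg
    have : 1 * (t^2*n+1) ≤ g1 * (t^2*n+1) := Nat.mul_le_mul_right _ (by omega)
    rw [Nat.one_mul] at this
    omega
  have hg2 : g2 = 0 := by
    by_contra hg
    have : 1 * (t^2*n+1) ≤ g2 * (t^2*n+1) := Nat.mul_le_mul_right _ (by omega)
    rw [Nat.one_mul] at this
    omega
  subst hg1 hg2
  have hd : n ∣ b + c := by
    refine ⟨a1*(t*n) + b1*(t*n) + b1 + a2*(t*n) + b2*(t*n) + b2, ?_⟩
    rw [← h1, ← h2]; ring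
  rw [← habc] at hd
  have hd2 : n ∣ t^2*n := ⟨t^2, by ring⟩
  have h9 : n ∣ 1 := (Nat.dvd_add_right hd2).mp hd
  have := Nat.le_of_dvd one_pos h9
  omega

lemma atoms_eq (y : ℕ) (hy : NumAtom (AddSubmonoid.closure ({t*n^2, t*n^2+n, t^2*n+1} : Set ℕ)) y) :
    y = t*n^2 ∨ y = t*n^2+n ∨ y = t^2*n+1 := by
  obtain ⟨hyT, hy0, hns⟩ := hy
  obtain ⟨α,β,γ,hrep⟩ := mem_closure_triple.mp hyT
  have ha0 : (0:ℕ) < t*n^2 := Nat.mul_pos (by omega) (pow_pos (by omega) 2)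
  have hb0 : (0:ℕ) < t*n^2+n := by omega
  have hc0 : (0:ℕ) < t^2*n+1 := by omega
  rcases Nat.lt_or_ge (α+β+γ) 2 with hlt|hge
  · have h1 : 1 ≤ α+β+γ := by
      by_contra hc
      push_neg at hc
      obtain ⟨rfl,rfl,rfl⟩ : α = 0 ∧ β = 0 ∧ γ = 0 := by omega
      simp at hrep
      exact hy0 hrep.symm
    rcases show (α=1∧β=0∧γ=0)∨(α=0∧β=1∧γ=0)∨(α=0∧β=0∧γ=1) by omega with
      ⟨rfl,rfl,rfl⟩|⟨rfl,rfl,rfl⟩|⟨rfl,rfl,rfl⟩ <;> simp at hrep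
    · exact Or.inl hrep.symm
    · exact Or.inr (Or.inl hrep.symm)
    · exact Or.inr (Or.inr hrep.symm)
  · exfalso
    apply hns
    rcases show 1 ≤ α ∨ 1 ≤ β ∨ 1 ≤ γ by omega with h|h|h
    · obtain ⟨α', rfl⟩ : ∃ α', α = α'+1 := ⟨α-1, by omega⟩
      exact ⟨t*n^2, α'*(t*n^2)+β*(t*n^2+n)+γ*(t^2*n+1),
        AddSubmonoid.subset_closure (by simp), mem_closure_triple.mpr ⟨α',β,γ,rfl⟩,
        by omega, repnz ha0 hb0 hc0 (by omega), by rw [← hrep]; ring⟩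
    · obtain ⟨β', rfl⟩ : ∃ β', β = β'+1 := ⟨β-1, by omega⟩
      exact ⟨t*n^2+n, α*(t*n^2)+β'*(t*n^2+n)+γ*(t^2*n+1),
        AddSubmonoid.subset_closure (by simp), mem_closure_triple.mpr ⟨α,β',γ,rfl⟩,
        by omega, repnz ha0 hb0 hc0 (by omega), by rw [← hrep]; ring⟩
    · obtain ⟨γ', rfl⟩ : ∃ γ', γ = γ'+1 := ⟨γ-1, by omega⟩
      exact ⟨t^2*n+1, α*(t*n^2)+β*(t*n^2+n)+γ'*(t^2*n+1),
        AddSubmonoid.subset_closure (by simp), mem_closure_triple.mpr ⟨α,β,γ',rfl⟩,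
        by omega, repnz ha0 hb0 hc0 (by omega), by rw [← hrep]; ring⟩
end

theorem stmt_13 (n t : ℕ) (hn : 3 ≤ n) (ht : n + 1 ≤ t) :
    (Set.Finite {m : ℕ | m ∉ AddSubmonoid.closure {t * n ^ 2, t * n ^ 2 + n, t ^ 2 * n + 1}}) ∧
    AS (AddSubmonoid.closure {t * n ^ 2, t * n ^ 2 + n, t ^ 2 * n + 1})
        (t ^ 2 * n ^ 2 + n) = {n, t} ∧
    (∀ α β γ : ℕ,
      α * (t * n ^ 2) + β * (t * n ^ 2 + n) + γ * (t ^ 2 * n + 1) = t ^ 2 * n ^ 2 + n →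
      (α, β, γ) = (0, 0, n) ∨ (α, β, γ) = (t - 1, 1, 0)) := by
  have hn0 : 0 < n := by omega
  have ht0 : 0 < t := by omega
  refine ⟨?_, ?_, ?_⟩
  · -- finiteness of the complement
    have cop : Nat.Coprime (t*n^2) (t^2*n+1) := by
      have h1 : Nat.Coprime n (t^2*n+1) := by
        have e : t^2*n+1 = 1 + n*t^2 := by ring
        rw [e, Nat.coprime_add_mul_left_right n 1 (t^2)]
        exact Nat.coprime_one_right n
      have h2 : Nat.Coprime t (t^2*n+1) := by
        have e : t^2*n+1 = 1 + t*(t*n) := by ring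
        rw [e, Nat.coprime_add_mul_left_right t 1 (t*n)]
        exact Nat.coprime_one_right t
      have e : t*n^2 = t*n*n := by ring
      rw [e]
      exact (h2.mul h1).mul h1
    have h1a : 1 < t*n^2 := by
      have e : t*n^2 = t*(n*n) := by ring
      have h9 : 9 ≤ n*n := Nat.mul_le_mul hn hn
      have h10 : 1*(n*n) ≤ t*(n*n) := Nat.mul_le_mul_right _ (by omega)
      omega
    have h1c : 1 < t^2*n+1 := by
      have : 0 < t^2*n := Nat.mul_pos (pow_pos ht0 2) hn0
      omega
    have hfrob := frobeniusNumber_pair cop h1a h1c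
    apply Set.Finite.subset (Set.finite_Iic (t*n^2 * (t^2*n+1) - (t*n^2) - (t^2*n+1)))
    intro k hk
    simp only [Set.mem_setOf_eq] at hk
    have hknot : k ∉ AddSubmonoid.closure ({t*n^2, t^2*n+1} : Set ℕ) := by
      intro hmem
      exact hk (AddSubmonoid.closure_mono
        (by intro z hz
            simp only [Set.mem_insert_iff, Set.mem_singleton_iff] at hz ⊢
            tauto) hmem)
    exact Set.mem_Iic.mpr (hfrob.2 hknot)
  · -- AS = {n, t}
    ext m
    simp only [AS, Set.mem_setOf_eq, Set.mem_insert_iff, Set.mem_singleton_iff]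
    constructor
    · rintro ⟨s, hats, hcard, hsum⟩
      obtain ⟨α,β,γ,hc2,hs2⟩ := sum_rep (t*n^2) (t*n^2+n) (t^2*n+1) s
        (fun y hy => atoms_eq n t hn ht y (hats y hy))
      rw [hsum] at hs2
      rcases key n t hn ht α β γ hs2.symm with ⟨rfl,rfl,rfl⟩|⟨h1,h2,h3⟩
      · left; omega
      · right; omega
    · rintro (h|h)
      · refine ⟨Multiset.replicate n (t^2*n+1), ?_, by simp [h], ?_⟩
        · intro y hy
          rw [Multiset.eq_of_mem_replicate hy]
          exact atom_c n t hn ht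
        · rw [Multiset.sum_replicate, smul_eq_mul]; ring
      · refine ⟨Multiset.replicate (t-1) (t*n^2) + {t*n^2+n}, ?_, ?_, ?_⟩
        · intro y hy
          rcases Multiset.mem_add.mp hy with h'|h'
          · rw [Multiset.eq_of_mem_replicate h']
            exact atom_a n t hn ht
          · rw [Multiset.mem_singleton.mp h']
            exact atom_b n t hn ht
        · simp; omega
        · obtain ⟨t', ht'⟩ : ∃ t', t = t'+1 := ⟨t-1, by omega⟩
          subst ht'
          simp only [Multiset.sum_add, Multiset.sum_replicate, Multiset.sum_singleton,
            Nat.add_sub_cancel, smul_eq_mul]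
          ring
  · -- the Diophantine statement
    intro α β γ h
    rcases key n t hn ht α β γ h with ⟨h1,h2,h3⟩|⟨h1,h2,h3⟩
    · left; simp [h1,h2,h3]
    · right; simp [h1,h2,h3]
end
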